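/- Let M ∈ ℝ^{n×n}, let W ∈ ℝ^{n×n} be symmetric positive semidefinite with positive semidefinite square root W^{1/2}, and suppose the pair (M, W^{1/2}) is controllable, i.e., the block matrix [W^{1/2} | M·W^{1/2} | ⋯ | M^{n−1}·W^{1/2}] ∈ ℝ^{n×n²} has rank n. Let X ∈ ℝ^{n×n} be symmetric and satisfy the discrete-time Lyapunov equation M X Mᵀ − X + W = 0. Then M is Schur stable if and only if X is positive definite. -/

import Mathlib

open Matrix

open Filter Topology

open scoped ENNReal NNReal

noncomputable section

/-- A real square matrix is Schur stable if every complex eigenvalue has modulus < 1. -/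
def IsSchur {n : ℕ} (M : Matrix (Fin n) (Fin n) ℝ) : Prop :=
  ∀ μ ∈ spectrum ℂ (M.map Complex.ofReal), ‖μ‖ < 1

/-- Controllability matrix `[C | M·C | ⋯ | M^{n−1}·C]` of the pair `(M, C)`. -/
def ctrbMatrix {n : ℕ} (M C : Matrix (Fin n) (Fin n) ℝ) :
    Matrix (Fin n) (Fin n × Fin n) ℝ :=
  Matrix.of fun i p => (M ^ (p.1 : ℕ) * C) i p.2

lemma pow_entry_tendsto_zero {N : ℕ} (A : Matrix (Fin N) (Fin N) ℂ)
    (h : ∀ μ ∈ spectrum ℂ A, ‖μ‖ < 1) (i j : Fin N) :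
    Tendsto (fun k : ℕ => (A ^ k) i j) atTop (𝓝 0) := by
  haveI : Nonempty (Fin N) := ⟨i⟩
  letI : SeminormedRing (Matrix (Fin N) (Fin N) ℂ) := Matrix.linftyOpSemiNormedRing
  letI : NormedRing (Matrix (Fin N) (Fin N) ℂ) := Matrix.linftyOpNormedRing
  letI : NormedAlgebra ℂ (Matrix (Fin N) (Fin N) ℂ) := Matrix.linftyOpNormedAlgebra
  haveI : Nontrivial (Matrix (Fin N) (Fin N) ℂ) :=
    ⟨0, 1, fun h0 => by simpa using congrFun (congrFun h0 i) i⟩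
  have hrad : spectralRadius ℂ A < 1 := by
    have h1 : ∀ z ∈ spectrum ℂ A, ‖z‖₊ < (1 : NNReal) := by
      intro z hz
      have := h z hz
      rw [← NNReal.coe_lt_coe]
      simpa using this
    simpa using spectrum.spectralRadius_lt_of_forall_lt (a := A) h1
  obtain ⟨c, hc1, hc2⟩ := exists_between hrad
  have hc_top : c ≠ ⊤ := (hc2.trans ENNReal.one_lt_top).ne
  set c' : NNReal := c.toNNReal with hc'
  have hcc : (c' : ℝ≥0∞) = c := ENNReal.coe_toNNReal hc_top
  have hc'lt : (c' : ℝ) < 1 := by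
    have : (c' : ℝ≥0∞) < 1 := hcc ▸ hc2
    exact_mod_cast this
  have hgel := spectrum.pow_nnnorm_pow_one_div_tendsto_nhds_spectralRadius A
  have hev : ∀ᶠ k : ℕ in atTop, (‖A ^ k‖₊ : ℝ≥0∞) ^ (1 / (k : ℝ)) < c :=
    hgel.eventually_lt_const hc1
  have hev2 : ∀ᶠ k : ℕ in atTop, ‖A ^ k‖ ≤ (c' : ℝ) ^ k := by
    filter_upwards [hev, eventually_ge_atTop 1] with k hk hk1
    have hkpos : (0 : ℝ) < (k : ℝ) := by exact_mod_cast hk1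
    have h2 := ENNReal.rpow_lt_rpow hk hkpos
    rw [← ENNReal.rpow_mul, one_div, inv_mul_cancel₀ hkpos.ne', ENNReal.rpow_one,
      ENNReal.rpow_natCast, ← hcc, ← ENNReal.coe_pow, ENNReal.coe_lt_coe] at h2
    have h3 : ‖A ^ k‖₊ ≤ c' ^ k := h2.le
    exact_mod_cast h3
  have hnorm : Tendsto (fun k : ℕ => ‖A ^ k‖) atTop (𝓝 0) := by
    refine squeeze_zero' (Eventually.of_forall fun k => norm_nonneg _) hev2 ?_
    exact tendsto_pow_atTop_nhds_zero_of_lt_one c'.coe_nonneg hc'lt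
  have hentry : ∀ k : ℕ, ‖(A ^ k) i j‖ ≤ ‖A ^ k‖ := by
    intro k
    have h4 : ‖(A ^ k) i j‖₊ ≤ ‖A ^ k‖₊ := by
      rw [Matrix.linfty_opNNNorm_def]
      exact le_trans (Finset.single_le_sum (f := fun j' => ‖(A ^ k) i j'‖₊)
        (fun _ _ => zero_le) (Finset.mem_univ j))
        (Finset.le_sup (f := fun i => ∑ j' : Fin N, ‖(A ^ k) i j'‖₊) (Finset.mem_univ i))
    exact_mod_cast h4
  exact squeeze_zero_norm hentry hnorm


lemma ctrb_kernel {n : ℕ} {M C : Matrix (Fin n) (Fin n) ℝ}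
    (h : (ctrbMatrix M C).rank = n) {v : Fin n → ℝ}
    (hv : ∀ k : Fin n, v ᵥ* (M ^ (k : ℕ) * C) = 0) : v = 0 := by
  have hrows : LinearIndependent ℝ (fun i => ctrbMatrix M C i) := by
    have h' : LinearIndependent ℝ (ctrbMatrix M C).row := by
      rw [linearIndependent_iff_card_eq_finrank_span, Fintype.card_fin, Set.finrank,
        ← Matrix.rank_eq_finrank_span_row, h]
    exact h'
  have hinj := Matrix.vecMul_injective_iff.mpr hrows
  have h0 : v ᵥ* ctrbMatrix M C = 0 ᵥ* ctrbMatrix M C := by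
    rw [Matrix.zero_vecMul]
    funext p
    have := congrFun (hv p.1) p.2
    simpa [Matrix.vecMul, dotProduct, ctrbMatrix] using this
  exact hinj h0

lemma re_quad {n : ℕ} (A : Matrix (Fin n) (Fin n) ℝ) (v : Fin n → ℂ) :
    (star v ⬝ᵥ (A.map Complex.ofReal *ᵥ v)).re =
      (fun i => (v i).re) ⬝ᵥ (A *ᵥ fun i => (v i).re) +
      (fun i => (v i).im) ⬝ᵥ (A *ᵥ fun i => (v i).im) := by
  simp only [dotProduct, Matrix.mulVec, Matrix.map_apply, Pi.star_apply, Complex.star_def,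
    Complex.re_sum, Complex.mul_re, Complex.conj_re, Complex.conj_im, Complex.im_sum,
    Complex.re_sum, Complex.ofReal_re, Complex.ofReal_im]
  rw [← Finset.sum_add_distrib]
  refine Finset.sum_congr rfl fun i _ => ?_
  simp [Complex.mul_re, Finset.mul_sum, Finset.sum_add_distrib]

lemma vecMul_re_im {n : ℕ} {B : Matrix (Fin n) (Fin n) ℝ} {v : Fin n → ℂ}
    (h : star v ᵥ* B.map Complex.ofReal = 0) :
    (fun i => (v i).re) ᵥ* B = 0 ∧ (fun i => (v i).im) ᵥ* B = 0 := by
  constructor <;> funext j <;>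
  [ (have h2 := congrArg Complex.re (congrFun h j)); (have h2 := congrArg Complex.im (congrFun h j))] <;>
  · simp only [Matrix.vecMul, dotProduct, Matrix.map_apply, Pi.star_apply,
      Complex.star_def, Pi.zero_apply, Complex.re_sum, Complex.im_sum, Complex.mul_re,
      Complex.mul_im, Complex.conj_re, Complex.conj_im, Complex.ofReal_re, Complex.ofReal_im,
      Complex.zero_re, Complex.zero_im, mul_zero, zero_mul, neg_mul, neg_zero, add_zero,
      zero_add, sub_zero] at h2
    simpa [Matrix.vecMul, dotProduct, Finset.sum_neg_distrib, neg_eq_zero] using h2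

lemma dot_sum_mulVec {n : ℕ} (v : Fin n → ℝ) (N : ℕ) (A : ℕ → Matrix (Fin n) (Fin n) ℝ) :
    v ⬝ᵥ ((∑ k ∈ Finset.range N, A k) *ᵥ v) = ∑ k ∈ Finset.range N, v ⬝ᵥ (A k *ᵥ v) := by
  induction N with
  | zero => simp
  | succ N ih =>
    rw [Finset.sum_range_succ, Finset.sum_range_succ, Matrix.add_mulVec,
      dotProduct_add, ih]

lemma forward_dir {n : ℕ} (M W Wsqrt X : Matrix (Fin n) (Fin n) ℝ)
    (hWs : Wsqrt.PosSemidef) (hWsq : Wsqrt * Wsqrt = W)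
    (hCtrb : (ctrbMatrix M Wsqrt).rank = n) (hX : X.IsHermitian)
    (hXeq2 : X = M * X * Mᵀ + W)
    (hs : ∀ μ ∈ spectrum ℂ (M.map Complex.ofReal), ‖μ‖ < 1) :
    X.PosDef := by
  have hWsT : Wsqrtᵀ = Wsqrt := by
    rw [← Matrix.conjTranspose_eq_transpose_of_trivial]; exact hWs.1
  refine Matrix.posDef_iff_dotProduct_mulVec.mpr ⟨hX, fun v hv => ?_⟩
  -- the quadratic form along trajectories
  set u : ℕ → Fin n → ℝ := fun k => (Mᵀ) ^ k *ᵥ v with hu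
  set a : ℕ → ℝ := fun k => v ⬝ᵥ ((M ^ k * W * (Mᵀ) ^ k) *ᵥ v) with hadef
  have hvM : ∀ k : ℕ, v ᵥ* M ^ k = u k := by
    intro k
    show v ᵥ* M ^ k = (Mᵀ) ^ k *ᵥ v
    rw [← Matrix.transpose_pow, Matrix.mulVec_transpose]
  have hWquad : ∀ w : Fin n → ℝ, w ⬝ᵥ (W *ᵥ w) = (Wsqrt *ᵥ w) ⬝ᵥ (Wsqrt *ᵥ w) := by
    intro w
    have hvw : w ᵥ* Wsqrt = Wsqrt *ᵥ w := by
      conv_lhs => rw [← hWsT]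
      rw [Matrix.vecMul_transpose]
    rw [← hWsq, ← Matrix.mulVec_mulVec, dotProduct_mulVec, hvw]
  have ha : ∀ k, a k = (Wsqrt *ᵥ u k) ⬝ᵥ (Wsqrt *ᵥ u k) := by
    intro k
    show v ⬝ᵥ ((M ^ k * W * (Mᵀ) ^ k) *ᵥ v) = _
    rw [← Matrix.mulVec_mulVec, ← Matrix.mulVec_mulVec, dotProduct_mulVec, hvM]
    exact hWquad (u k)
  have hanneg : ∀ k, 0 ≤ a k := fun k => by
    rw [ha k]; exact Finset.sum_nonneg fun i _ => mul_self_nonneg _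
  -- decomposition
  have hdecomp : ∀ N : ℕ, X = (∑ k ∈ Finset.range N, M ^ k * W * (Mᵀ) ^ k)
      + M ^ N * X * (Mᵀ) ^ N := by
    intro N
    induction N with
    | zero => simp
    | succ N ih =>
      have key : M ^ N * X * (Mᵀ) ^ N =
          M ^ N * W * (Mᵀ) ^ N + M ^ (N + 1) * X * (Mᵀ) ^ (N + 1) := by
        conv_lhs => rw [hXeq2]
        rw [pow_succ, pow_succ']
        noncomm_ring
      rw [Finset.sum_range_succ, add_assoc, ← key, ← ih]
  have hsum : ∀ N : ℕ, v ⬝ᵥ (X *ᵥ v)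
      = (∑ k ∈ Finset.range N, a k) + v ⬝ᵥ ((M ^ N * X * (Mᵀ) ^ N) *ᵥ v) := by
    intro N
    conv_lhs => rw [hdecomp N]
    rw [Matrix.add_mulVec, dotProduct_add, dot_sum_mulVec]
  -- powers tend to zero
  have hmp : ∀ k : ℕ, (M.map Complex.ofReal) ^ k = (M ^ k).map Complex.ofReal := by
    intro k
    have h1 := map_pow (Complex.ofRealHom.mapMatrix) M k
    simpa [RingHom.mapMatrix_apply, Complex.ofRealHom_eq_coe,
      (show (⇑Complex.ofRealHom : ℝ → ℂ) = Complex.ofReal from rfl)] using h1.symm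
  have hpowz : Tendsto (fun N : ℕ => M ^ N) atTop (𝓝 0) := by
    refine tendsto_pi_nhds.mpr fun i => ?_
    rw [tendsto_pi_nhds]; intro j
    have hc := pow_entry_tendsto_zero (M.map Complex.ofReal) hs i j
    have hre : ∀ k : ℕ, (M ^ k) i j = (((M.map Complex.ofReal) ^ k) i j).re := by
      intro k; rw [hmp k]; simp [Matrix.map_apply]
    have := (Complex.continuous_re.tendsto 0).comp hc
    simp only [Function.comp_def, Complex.zero_re] at this
    simpa [← hre] using this
  have hg : Continuous (fun A : Matrix (Fin n) (Fin n) ℝ => v ⬝ᵥ ((A * X * Aᵀ) *ᵥ v)) := by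
    exact (continuous_const.dotProduct
      (((continuous_id.matrix_mul continuous_const).matrix_mul
        continuous_id.matrix_transpose).matrix_mulVec continuous_const))
  have htail : Tendsto (fun N : ℕ => v ⬝ᵥ ((M ^ N * X * (Mᵀ) ^ N) *ᵥ v)) atTop (𝓝 0) := by
    have h2 := (hg.tendsto 0).comp hpowz
    simp only [Function.comp_def, Matrix.zero_mul, Matrix.mul_zero,
      Matrix.zero_mulVec, dotProduct_zero, Matrix.transpose_zero] at h2
    simpa [Matrix.transpose_pow] using h2
  have hstend : Tendsto (fun N : ℕ => ∑ k ∈ Finset.range N, a k) atTop (𝓝 (v ⬝ᵥ (X *ᵥ v))) := by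
    have heq : (fun N : ℕ => ∑ k ∈ Finset.range N, a k)
        = fun N => v ⬝ᵥ (X *ᵥ v) - v ⬝ᵥ ((M ^ N * X * (Mᵀ) ^ N) *ᵥ v) := by
      funext N; rw [hsum N]; ring
    rw [heq]
    simpa using tendsto_const_nhds.sub htail
  have hmono : Monotone (fun N : ℕ => ∑ k ∈ Finset.range N, a k) := by
    apply monotone_nat_of_le_succ
    intro N
    rw [Finset.sum_range_succ]
    exact le_add_of_nonneg_right (hanneg N)
  have hle : ∀ N : ℕ, (∑ k ∈ Finset.range N, a k) ≤ v ⬝ᵥ (X *ᵥ v) :=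
    fun N => hmono.ge_of_tendsto hstend N
  -- controllability gives a positive term
  have hex : ∃ k : Fin n, Wsqrt *ᵥ u (k : ℕ) ≠ 0 := by
    by_contra hall
    push_neg at hall
    refine hv (ctrb_kernel hCtrb fun k => ?_)
    have hvw : u (k : ℕ) ᵥ* Wsqrt = Wsqrt *ᵥ u (k : ℕ) := by
      conv_lhs => rw [← hWsT]
      rw [Matrix.vecMul_transpose]
    rw [← Matrix.vecMul_vecMul, hvM, hvw, hall k]
  obtain ⟨k0, hk0⟩ := hex
  have hpos : 0 < a (k0 : ℕ) := by
    rw [ha]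
    rcases (dotProduct_self_eq_zero (v := Wsqrt *ᵥ u (k0 : ℕ))).not.mpr hk0 with h'
    exact lt_of_le_of_ne (Finset.sum_nonneg fun i _ => mul_self_nonneg _) (Ne.symm h')
  have : 0 < v ⬝ᵥ (X *ᵥ v) := by
    calc (0:ℝ) < a (k0 : ℕ) := hpos
    _ ≤ ∑ k ∈ Finset.range ((k0 : ℕ) + 1), a k := by
        apply Finset.single_le_sum (f := a) (fun i _ => hanneg i)
        simp
    _ ≤ v ⬝ᵥ (X *ᵥ v) := hle _
  simpa using this

lemma backward_dir {n : ℕ} (M W Wsqrt X : Matrix (Fin n) (Fin n) ℝ)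
    (hW : W.PosSemidef) (hWs : Wsqrt.PosSemidef) (hWsq : Wsqrt * Wsqrt = W)
    (hCtrb : (ctrbMatrix M Wsqrt).rank = n)
    (hXeq2 : X = M * X * Mᵀ + W) (hpd : X.PosDef) :
    ∀ μ ∈ spectrum ℂ (M.map Complex.ofReal), ‖μ‖ < 1 := by
  intro μ hμ
  by_contra habs
  push_neg at habs
  set Mc := M.map Complex.ofReal with hMcdef
  set Xc := X.map Complex.ofReal with hXcdef
  set Wc := W.map Complex.ofReal with hWcdef
  set Wsc := Wsqrt.map Complex.ofReal with hWscdef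
  -- eigenvector of the transpose
  have hdet : (algebraMap ℂ (Matrix (Fin n) (Fin n) ℂ) μ - Mc).det = 0 := by
    rw [spectrum.mem_iff] at hμ
    by_contra hd
    exact hμ ((Matrix.isUnit_iff_isUnit_det _).mpr (isUnit_iff_ne_zero.mpr hd))
  have hdetT : ((algebraMap ℂ (Matrix (Fin n) (Fin n) ℂ) μ - Mc)ᵀ).det = 0 := by
    rw [Matrix.det_transpose]; exact hdet
  obtain ⟨v, hv0, hveq⟩ := (Matrix.exists_mulVec_eq_zero_iff).mpr hdetT
  have hEig : Mcᵀ *ᵥ v = μ • v := by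
    have h1 : ((algebraMap ℂ (Matrix (Fin n) (Fin n) ℂ) μ)ᵀ - Mcᵀ) *ᵥ v = 0 := by
      rw [← Matrix.transpose_sub]; exact hveq
    rw [Matrix.sub_mulVec] at h1
    have h2 : (algebraMap ℂ (Matrix (Fin n) (Fin n) ℂ) μ)ᵀ *ᵥ v = μ • v := by
      rw [Matrix.algebraMap_eq_diagonal, Matrix.diagonal_transpose]
      funext i
      simp [Matrix.mulVec_diagonal]
    rw [h2] at h1
    exact (sub_eq_zero.mp h1).symm
  -- star relation
  have hMcH : (Mcᵀ)ᴴ = Mc := by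
    ext i j
    simp [Matrix.conjTranspose_apply, hMcdef, Matrix.map_apply]
  have hstar : star v ᵥ* Mc = (starRingEnd ℂ μ) • star v := by
    have h1 := congrArg star hEig
    rw [Matrix.star_mulVec, hMcH, star_smul] at h1
    exact h1
  have hstarpow : ∀ k : ℕ, star v ᵥ* Mc ^ k = ((starRingEnd ℂ μ) ^ k) • star v := by
    intro k
    induction k with
    | zero => simp
    | succ k ih =>
      rw [pow_succ, ← Matrix.vecMul_vecMul, ih, Matrix.smul_vecMul, hstar, smul_smul, pow_succ]
  -- complexified Lyapunov equation
  have hXc : Xc = Mc * Xc * Mcᵀ + Wc := by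
    have h2 := congrArg (Complex.ofRealHom.mapMatrix) hXeq2
    simpa [RingHom.mapMatrix_apply, map_add, _root_.map_mul, Matrix.transpose_map,
      Complex.ofRealHom_eq_coe,
      (show (⇑Complex.ofRealHom : ℝ → ℂ) = Complex.ofReal from rfl), hMcdef, hXcdef, hWcdef] using h2
  -- scalar equation
  have heq : star v ⬝ᵥ (Xc *ᵥ v)
      = (starRingEnd ℂ μ * μ) * (star v ⬝ᵥ (Xc *ᵥ v)) + star v ⬝ᵥ (Wc *ᵥ v) := by
    conv_lhs => rw [hXc]
    rw [Matrix.add_mulVec, dotProduct_add, ← Matrix.mulVec_mulVec, ← Matrix.mulVec_mulVec,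
      dotProduct_mulVec, hstar, hEig, Matrix.mulVec_smul, dotProduct_smul,
      smul_dotProduct]
    rw [smul_eq_mul, smul_eq_mul]
    ring
  -- real parts
  set av : Fin n → ℝ := fun i => (v i).re with havdef
  set bv : Fin n → ℝ := fun i => (v i).im with hbvdef
  have hq := re_quad X v
  have hw := re_quad W v
  have hab : av ≠ 0 ∨ bv ≠ 0 := by
    by_contra hcon
    push_neg at hcon
    apply hv0
    funext i
    have h1 := congrFun hcon.1 i
    have h2 := congrFun hcon.2 i
    simp only [havdef, hbvdef, Pi.zero_apply] at h1 h2
    exact Complex.ext h1 h2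
  have hqpos : 0 < (star v ⬝ᵥ (Xc *ᵥ v)).re := by
    rw [← hXcdef] at hq
    rw [hq]
    rcases hab with h | h
    · have := hpd.dotProduct_mulVec_pos h
      rw [star_trivial] at this
      have h2 := hpd.posSemidef.dotProduct_mulVec_nonneg bv
      rw [star_trivial] at h2
      linarith
    · have := hpd.dotProduct_mulVec_pos h
      rw [star_trivial] at this
      have h2 := hpd.posSemidef.dotProduct_mulVec_nonneg av
      rw [star_trivial] at h2
      linarith
  have hwre : 0 ≤ (star v ⬝ᵥ (Wc *ᵥ v)).re := by
    rw [← hWcdef] at hw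
    rw [hw]
    have h1 := hW.dotProduct_mulVec_nonneg av; have h2 := hW.dotProduct_mulVec_nonneg bv
    rw [star_trivial] at h1 h2
    linarith
  -- |μ|² ≥ 1
  have hns : 1 ≤ Complex.normSq μ := by
    have := habs
    rw [← Complex.sq_norm]
    nlinarith [norm_nonneg μ]
  -- take real part of the scalar equation
  have hre : (star v ⬝ᵥ (Xc *ᵥ v)).re
      = Complex.normSq μ * (star v ⬝ᵥ (Xc *ᵥ v)).re + (star v ⬝ᵥ (Wc *ᵥ v)).re := by
    have h1 := congrArg Complex.re heq
    rw [Complex.add_re] at h1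
    have h2 : starRingEnd ℂ μ * μ = (Complex.normSq μ : ℂ) := by
      rw [mul_comm, Complex.mul_conj]
    rw [h2, Complex.re_ofReal_mul] at h1
    exact h1
  have hwzero : (star v ⬝ᵥ (Wc *ᵥ v)).re = 0 := by
    nlinarith
  -- Wsqrt kills both real and imaginary parts
  have haw : Wsqrt *ᵥ av = 0 ∧ Wsqrt *ᵥ bv = 0 := by
    rw [← hWcdef] at hw
    rw [hw] at hwzero
    have hWsT : Wsqrtᵀ = Wsqrt := by
      rw [← Matrix.conjTranspose_eq_transpose_of_trivial]; exact hWs.1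
    have hWquad : ∀ w : Fin n → ℝ, w ⬝ᵥ (W *ᵥ w) = (Wsqrt *ᵥ w) ⬝ᵥ (Wsqrt *ᵥ w) := by
      intro w
      have hvw : w ᵥ* Wsqrt = Wsqrt *ᵥ w := by
        conv_lhs => rw [← hWsT]
        rw [Matrix.vecMul_transpose]
      rw [← hWsq, ← Matrix.mulVec_mulVec, dotProduct_mulVec, hvw]
    have h1 : 0 ≤ av ⬝ᵥ (W *ᵥ av) := by rw [hWquad]; exact Finset.sum_nonneg fun i _ => mul_self_nonneg _
    have h2 : 0 ≤ bv ⬝ᵥ (W *ᵥ bv) := by rw [hWquad]; exact Finset.sum_nonneg fun i _ => mul_self_nonneg _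
    constructor
    · rw [← dotProduct_self_eq_zero (v := Wsqrt *ᵥ av), ← hWquad]
      linarith
    · rw [← dotProduct_self_eq_zero (v := Wsqrt *ᵥ bv), ← hWquad]
      linarith
  have hWsv : Wsc *ᵥ v = 0 := by
    funext i
    have h1 := congrFun haw.1 i
    have h2 := congrFun haw.2 i
    simp only [Matrix.mulVec, dotProduct, Pi.zero_apply, havdef, hbvdef] at h1 h2 ⊢
    apply Complex.ext
    · simpa [hWscdef, Complex.re_sum, Matrix.map_apply] using h1
    · simpa [hWscdef, Complex.im_sum, Matrix.map_apply] using h2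
  have hWsH : Wscᴴ = Wsc := by
    have hWsT : Wsqrtᵀ = Wsqrt := by
      rw [← Matrix.conjTranspose_eq_transpose_of_trivial]; exact hWs.1
    have hsymm : ∀ p q, Wsqrt p q = Wsqrt q p := by
      intro p q
      conv_lhs => rw [← hWsT]
      rfl
    ext i j
    simp only [Matrix.conjTranspose_apply, hWscdef, Matrix.map_apply, Complex.star_def,
      Complex.conj_ofReal]
    exact congrArg _ (hsymm j i)
  have hsvW : star v ᵥ* Wsc = 0 := by
    have h1 := congrArg star hWsv
    rw [Matrix.star_mulVec, hWsH] at h1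
    simpa using h1
  -- controllability contradiction
  have hker : ∀ k : Fin n, star v ᵥ* ((M ^ (k : ℕ) * Wsqrt).map Complex.ofReal) = 0 := by
    intro k
    have hmap : (M ^ (k : ℕ) * Wsqrt).map Complex.ofReal = Mc ^ (k : ℕ) * Wsc := by
      have h1 : Complex.ofRealHom.mapMatrix (M ^ (k:ℕ) * Wsqrt)
          = (Complex.ofRealHom.mapMatrix M) ^ (k:ℕ) * Complex.ofRealHom.mapMatrix Wsqrt := by
        rw [_root_.map_mul, map_pow]
      simp only [RingHom.mapMatrix_apply] at h1
      exact h1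
    rw [hmap, ← Matrix.vecMul_vecMul, hstarpow, Matrix.smul_vecMul, hsvW, smul_zero]
  have hva : av = 0 := by
    refine ctrb_kernel hCtrb fun k => ?_
    exact (vecMul_re_im (hker k)).1
  have hvb : bv = 0 := by
    refine ctrb_kernel hCtrb fun k => ?_
    exact (vecMul_re_im (hker k)).2
  rcases hab with h | h
  · exact h hva
  · exact h hvb

/-- For a controllable pair `(M, W^{1/2})`, the discrete-time Lyapunov solution is
positive definite iff `M` is Schur stable. -/
theorem stmt_11 {n : ℕ}
    (M W Wsqrt X : Matrix (Fin n) (Fin n) ℝ)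
    (hW : W.PosSemidef) (hWs : Wsqrt.PosSemidef) (hWsq : Wsqrt * Wsqrt = W)
    (hCtrb : (ctrbMatrix M Wsqrt).rank = n)
    (hX : X.IsHermitian)
    (hXEq : M * X * Mᵀ - X + W = 0) :
    IsSchur M ↔ X.PosDef := by
  have hXeq2 : X = M * X * Mᵀ + W := by
    have h1 : M * X * Mᵀ + W - X = 0 := by
      rw [← hXEq]; abel
    exact (sub_eq_zero.mp h1).symm
  constructor
  · intro hschur
    exact forward_dir M W Wsqrt X hWs hWsq hCtrb hX hXeq2 hschur
  · intro hpd
    exact backward_dir M W Wsqrt X hW hWs hWsq hCtrb hXeq2 hpd
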